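/- arXiv:1112.1346 — 2 statements merged into one kernel-verified Lean document; each statement's English description precedes it below -/
import Mathlib

section
/- Let h be a symmetric bilinear form on an n-dimensional real inner product space (V,g). For all integers i ≥ 0 and r with i+1 ≤ r ≤ n−i, the extended (r,n−i)-cofactor of h vanishes: s_{(r,n−i)}(h) = 0. (For i = 0 and r = 1 this is the Cayley–Hamilton theorem for h.) -/
noncomputable section

open Finset

/-- Double forms over an `n`-dimensional real inner product space, described by their
coefficients in a fixed orthonormal basis: a `(p,q)`-double form corresponds to a function
supported on pairs of subsets of cardinalities `p` and `q`. -/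
abbrev DForm (n : ℕ) := Finset (Fin n) → Finset (Fin n) → ℝ

namespace DForm

variable {n : ℕ}

/-- Sign of the shuffle placing the elements of `A` (in increasing order) before
those of `B` (in increasing order). -/
def shuffleSign (A B : Finset (Fin n)) : ℝ :=
  (-1 : ℝ) ^ (∑ x ∈ B, (A.filter fun a => x < a).card)

/-- The exterior product of double forms. -/
def wedge (ω₁ ω₂ : DForm n) : DForm n := fun I J =>
  ∑ A ∈ I.powerset, ∑ B ∈ J.powerset,
    shuffleSign A (I \ A) * shuffleSign B (J \ B) * ω₁ A B * ω₂ (I \ A) (J \ B)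

/-- Exterior powers `ω^k` of a double form. -/
def dpow (ω : DForm n) : ℕ → DForm n
  | 0 => fun I J => if I = ∅ ∧ J = ∅ then 1 else 0
  | k + 1 => wedge ω (dpow ω k)

/-- The double Hodge star operator. -/
def hstar (ω : DForm n) : DForm n := fun I J =>
  shuffleSign Iᶜ I * shuffleSign Jᶜ J * ω Iᶜ Jᶜ

/-- The contraction `c` of double forms. -/
def contr (ω : DForm n) : DForm n := fun I J =>
  ∑ j : Fin n,
    if j ∈ I ∨ j ∈ J then 0
    else shuffleSign {j} I * shuffleSign {j} J * ω (insert j I) (insert j J)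

/-- Iterated contraction `c^k`. -/
def citer (ω : DForm n) : ℕ → DForm n
  | 0 => ω
  | k + 1 => contr (citer ω k)

/-- The inner product of double forms. -/
def dinner (ω₁ ω₂ : DForm n) : ℝ :=
  ∑ I : Finset (Fin n), ∑ J : Finset (Fin n), ω₁ I J * ω₂ I J

/-- The transpose `ω^t` of a double form. -/
def transp (ω : DForm n) : DForm n := fun I J => ω J I

/-- The composition (Greub) product `ω₁ ∘ ω₂` of double forms. -/
def comp (ω₁ ω₂ : DForm n) : DForm n := fun I J =>
  ∑ K : Finset (Fin n), ω₂ I K * ω₁ K J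

/-- The scalar value of a `(0,0)`-double form. -/
def toScalar (ω : DForm n) : ℝ := ω ∅ ∅

/-- The metric, as a `(1,1)`-double form. -/
def gMetric (n : ℕ) : DForm n := fun I J => if I = J ∧ I.card = 1 then 1 else 0

/-- Iterated composition power `ω^{∘r}` of a `(1,1)`-double form, with `ω^{∘0} = g`. -/
def cpow (ω : DForm n) : ℕ → DForm n
  | 0 => gMetric n
  | r + 1 => comp ω (cpow ω r)

/-- The `(1,1)`-double form associated to a bilinear form, given by its matrix in the
orthonormal basis. -/
def ofMatrix (h : Matrix (Fin n) (Fin n) ℝ) : DForm n := fun I J =>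
  ∑ i : Fin n, ∑ j : Fin n, if I = {i} ∧ J = {j} then h i j else 0

/-- `ω` is a `(p,q)`-double form. -/
def IsOfDeg (ω : DForm n) (p q : ℕ) : Prop :=
  ∀ I J : Finset (Fin n), ω I J ≠ 0 → I.card = p ∧ J.card = q

/-- `ω` is a symmetric double form. -/
def IsSym (ω : DForm n) : Prop := ∀ I J, ω I J = ω J I

/-- The sign relating `e_{v 0} ∧ ⋯ ∧ e_{v (p-1)}` to the corresponding increasing
basis `p`-vector (and `0` if the indices are not pairwise distinct). -/
def tupleSign {p : ℕ} (v : Fin p → Fin n) : ℝ :=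
  if Function.Injective v then (((Equiv.Perm.sign (Tuple.sort v)) : ℤ) : ℝ) else 0

/-- Evaluation of a double form on wedges of basis vectors indexed by arbitrary tuples. -/
def evalT (ω : DForm n) {p q : ℕ} (v : Fin p → Fin n) (w : Fin q → Fin n) : ℝ :=
  tupleSign v * tupleSign w * ω (Finset.image v Finset.univ) (Finset.image w Finset.univ)

/-- The first Bianchi identity for a `(2,2)`-double form:
`R(x∧y,z∧t) + R(y∧z,x∧t) + R(z∧x,y∧t) = 0`. -/
def Bianchi2 (R : DForm n) : Prop :=
  ∀ x y z t : Fin n,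
    evalT R ![x, y] ![z, t] + evalT R ![y, z] ![x, t] + evalT R ![z, x] ![y, t] = 0

/-- The first Bianchi identity for a `(p,p)`-double form. -/
def FirstBianchi (ω : DForm n) (p : ℕ) : Prop :=
  ∀ (x : Fin (p + 1) → Fin n) (y : Fin (p - 1) → Fin n),
    ∑ j : Fin (p + 1),
      (-1 : ℝ) ^ (j : ℕ) * evalT ω (x ∘ Fin.succAbove j) (Fin.cons (x j) y) = 0

/-- The characteristic coefficient `s_k(h)` of a bilinear form `h`, defined through the
characteristic polynomial: `det(h - λ g) = ∑ (-1)^(n-i) s_i(h) λ^(n-i)`. -/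
def sInv (h : Matrix (Fin n) (Fin n) ℝ) (k : ℕ) : ℝ :=
  (-1 : ℝ) ^ k * (Matrix.charpoly h).coeff (n - k)

/-- The `k`-th cofactor (Newton) transformation `t_k(h) = (1/(k!(n-1-k)!)) *(g^{n-1-k} h^k)`. -/
def tInv (h : Matrix (Fin n) (Fin n) ℝ) (k : ℕ) : DForm n :=
  ((k.factorial * (n - 1 - k).factorial : ℕ) : ℝ)⁻¹ •
    hstar (wedge (dpow (gMetric n) (n - 1 - k)) (dpow (ofMatrix h) k))

/-- The `(r,q)`-cofactor `s_{(r,q)}(h) = (1/(q!(n-q-r)!)) *(g^{n-q-r} h^q)`. -/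
def sCof (h : Matrix (Fin n) (Fin n) ℝ) (r q : ℕ) : DForm n :=
  ((q.factorial * (n - q - r).factorial : ℕ) : ℝ)⁻¹ •
    hstar (wedge (dpow (gMetric n) (n - q - r)) (dpow (ofMatrix h) q))

end DForm
namespace DForm
/-- The extended `(r,q)`-cofactor of a bilinear form, defined by the expansion
`s_{(r,q)}(h) = ∑_{i=max(0,q-r)}^{q} ((-1)^{i+q}/(i! q! (i+r-q)!)) g^{i+r-q} c^i(h^q)`. -/
noncomputable def sCofExt {n : ℕ} (h : Matrix (Fin n) (Fin n) ℝ) (r q : ℕ) : DForm n :=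
  ∑ i ∈ Finset.Icc (q - r) q,
    ((-1 : ℝ) ^ (i + q) /
        ((i.factorial : ℝ) * (q.factorial : ℝ) * ((i + r - q).factorial : ℝ))) •
      wedge (dpow (gMetric n) (i + r - q)) (citer (dpow (ofMatrix h) q) i)
end DForm



namespace DForm
variable {n : ℕ}

lemma shuffleSign_empty_left (B : Finset (Fin n)) : shuffleSign ∅ B = 1 := by
  simp [shuffleSign]

lemma shuffleSign_empty_right (A : Finset (Fin n)) : shuffleSign A ∅ = 1 := by
  simp [shuffleSign]

lemma shuffleSign_union_right {B C : Finset (Fin n)} (A : Finset (Fin n))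
    (h : Disjoint B C) : shuffleSign A (B ∪ C) = shuffleSign A B * shuffleSign A C := by
  rw [shuffleSign, shuffleSign, shuffleSign, Finset.sum_union h, pow_add]

lemma shuffleSign_union_left {A B : Finset (Fin n)} (C : Finset (Fin n))
    (h : Disjoint A B) : shuffleSign (A ∪ B) C = shuffleSign A C * shuffleSign B C := by
  rw [shuffleSign, shuffleSign, shuffleSign, ← pow_add, ← Finset.sum_add_distrib]
  congr 1
  refine Finset.sum_congr rfl fun x _ => ?_
  rw [Finset.filter_union, Finset.card_union_of_disjoint]
  exact Finset.disjoint_filter_filter h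

lemma shuffleSign_mul_self (A B : Finset (Fin n)) :
    shuffleSign A B * shuffleSign A B = 1 := by
  rw [shuffleSign, ← pow_add, ← two_mul, pow_mul]
  norm_num

lemma shuffleSign_singleton_mul {a j : Fin n} (hne : a ≠ j) :
    shuffleSign {j} {a} * shuffleSign {a} {j} = -1 := by
  rcases lt_or_gt_of_ne hne with hl | hl
  · simp [shuffleSign, Finset.filter_singleton, hl, not_lt_of_gt hl]
  · simp [shuffleSign, Finset.filter_singleton, hl, not_lt_of_gt hl]

lemma sum_powerset_sdiff {M : Type*} [AddCommMonoid M] (I : Finset (Fin n))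
    (F : Finset (Fin n) → Finset (Fin n) → M) :
    ∑ C ∈ I.powerset, ∑ A ∈ C.powerset, F A (C \ A)
      = ∑ A ∈ I.powerset, ∑ A' ∈ (I \ A).powerset, F A A' := by
  rw [Finset.sum_sigma', Finset.sum_sigma']
  refine Finset.sum_nbij' (fun x => ⟨x.2, x.1 \ x.2⟩) (fun y => ⟨y.1 ∪ y.2, y.1⟩) ?_ ?_ ?_ ?_ ?_
  · rintro ⟨C, A⟩ hx
    simp only [Finset.mem_sigma, Finset.mem_powerset] at hx ⊢
    exact ⟨hx.2.trans hx.1, Finset.sdiff_subset_sdiff hx.1 (le_refl _)⟩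
  · rintro ⟨A, A'⟩ hy
    simp only [Finset.mem_sigma, Finset.mem_powerset] at hy ⊢
    constructor
    · exact Finset.union_subset hy.1 (hy.2.trans (Finset.sdiff_subset))
    · exact Finset.subset_union_left
  · rintro ⟨C, A⟩ hx
    simp only [Finset.mem_sigma, Finset.mem_powerset] at hx
    simp [Finset.union_sdiff_of_subset hx.2]
  · rintro ⟨A, A'⟩ hy
    simp only [Finset.mem_sigma, Finset.mem_powerset] at hy
    have hd : Disjoint A A' := Finset.disjoint_of_subset_right hy.2 Finset.disjoint_sdiff
    simp [Finset.union_sdiff_cancel_left hd]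
  · rintro ⟨C, A⟩ _
    rfl


lemma sdiff_sdiff_sdiff' {A C I : Finset (Fin n)} (hAC : A ⊆ C) :
    (I \ A) \ (C \ A) = I \ C := by
  ext x
  simp only [Finset.mem_sdiff, not_and, not_not]
  constructor
  · rintro ⟨⟨hI, hA⟩, hC⟩
    exact ⟨hI, fun hxC => hA ((hC hxC))⟩
  · rintro ⟨hI, hC⟩
    exact ⟨⟨hI, fun hxA => hC (hAC hxA)⟩, fun hxC => absurd hxC hC⟩

lemma shuffleSign_assoc {A C I : Finset (Fin n)} (hAC : A ⊆ C) (hCI : C ⊆ I) :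
    shuffleSign C (I \ C) * shuffleSign A (C \ A)
      = shuffleSign A (I \ A) * shuffleSign (C \ A) ((I \ A) \ (C \ A)) := by
  have h1 : A ∪ (C \ A) = C := Finset.union_sdiff_of_subset hAC
  have h2 : (C \ A) ∪ (I \ C) = I \ A := by
    rw [Finset.union_comm]
    exact Finset.sdiff_union_sdiff_cancel hCI hAC
  have hd1 : Disjoint A (C \ A) := Finset.disjoint_sdiff
  have hd2 : Disjoint (C \ A) (I \ C) := by
    rw [Finset.disjoint_left]
    intro x hx hx'
    exact (Finset.mem_sdiff.1 hx').2 ((Finset.mem_sdiff.1 hx).1)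
  have e1 := shuffleSign_union_left (A := A) (B := C \ A) (I \ C) hd1
  rw [h1] at e1
  have e2 := shuffleSign_union_right (B := C \ A) (C := I \ C) A hd2
  rw [h2] at e2
  rw [sdiff_sdiff_sdiff' hAC, e1, e2]
  ring

lemma wedge_assoc (ω₁ ω₂ ω₃ : DForm n) :
    wedge (wedge ω₁ ω₂) ω₃ = wedge ω₁ (wedge ω₂ ω₃) := by
  funext I J
  have can : wedge ω₁ (wedge ω₂ ω₃) I J
      = ∑ A ∈ I.powerset, ∑ A' ∈ (I \ A).powerset, ∑ B ∈ J.powerset, ∑ B' ∈ (J \ B).powerset,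
        shuffleSign A (I \ A) * shuffleSign A' ((I \ A) \ A') * shuffleSign B (J \ B) *
          shuffleSign B' ((J \ B) \ B') * ω₁ A B * ω₂ A' B' *
          ω₃ ((I \ A) \ A') ((J \ B) \ B') := by
    simp only [wedge, Finset.mul_sum]
    refine Finset.sum_congr rfl fun A hA => ?_
    rw [Finset.sum_comm]
    refine Finset.sum_congr rfl fun A' hA' => ?_
    refine Finset.sum_congr rfl fun B hB => ?_
    refine Finset.sum_congr rfl fun B' hB' => ?_
    ring
  rw [can]
  trans (∑ C ∈ I.powerset, ∑ A ∈ C.powerset,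
      (fun A A' => ∑ D ∈ J.powerset, ∑ B ∈ D.powerset,
        shuffleSign A (I \ A) * shuffleSign A' ((I \ A) \ A') * shuffleSign D (J \ D) *
          shuffleSign B (D \ B) * ω₁ A B * ω₂ A' (D \ B) *
          ω₃ ((I \ A) \ A') (J \ D)) A (C \ A))
  · simp only [wedge, Finset.mul_sum, Finset.sum_mul]
    refine Finset.sum_congr rfl fun C hC => ?_
    rw [Finset.sum_comm]
    refine Finset.sum_congr rfl fun A hA => ?_
    refine Finset.sum_congr rfl fun D hD => Finset.sum_congr rfl fun B hB => ?_
    have hAC : A ⊆ C := Finset.mem_powerset.1 hA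
    have hCI : C ⊆ I := Finset.mem_powerset.1 hC
    have hset : (I \ A) \ (C \ A) = I \ C := sdiff_sdiff_sdiff' hAC
    have hs := shuffleSign_assoc hAC hCI
    rw [hset] at hs
    rw [hset]
    linear_combination (shuffleSign D (J \ D) * shuffleSign B (D \ B) * ω₁ A B *
      ω₂ (C \ A) (D \ B) * ω₃ (I \ C) (J \ D)) * hs
  · refine (sum_powerset_sdiff (M := ℝ) I (fun A A' =>
      ∑ D ∈ J.powerset, ∑ B ∈ D.powerset,
        shuffleSign A (I \ A) * shuffleSign A' ((I \ A) \ A') * shuffleSign D (J \ D) *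
          shuffleSign B (D \ B) * ω₁ A B * ω₂ A' (D \ B) *
          ω₃ ((I \ A) \ A') (J \ D))).trans ?_
    refine Finset.sum_congr rfl fun A hA => Finset.sum_congr rfl fun A' hA' => ?_
    trans (∑ D ∈ J.powerset, ∑ B ∈ D.powerset,
        (fun B B' => shuffleSign A (I \ A) * shuffleSign A' ((I \ A) \ A') *
          shuffleSign B (J \ B) * shuffleSign B' ((J \ B) \ B') * ω₁ A B * ω₂ A' B' *
          ω₃ ((I \ A) \ A') ((J \ B) \ B')) B (D \ B))
    · refine Finset.sum_congr rfl fun D hD => Finset.sum_congr rfl fun B hB => ?_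
      have hBD : B ⊆ D := Finset.mem_powerset.1 hB
      have hDJ : D ⊆ J := Finset.mem_powerset.1 hD
      have hset : (J \ B) \ (D \ B) = J \ D := sdiff_sdiff_sdiff' hBD
      have hs := shuffleSign_assoc hBD hDJ
      rw [hset] at hs
      simp only [hset]
      linear_combination (shuffleSign A (I \ A) * shuffleSign A' ((I \ A) \ A') * ω₁ A B *
        ω₂ A' (D \ B) * ω₃ ((I \ A) \ A') (J \ D)) * hs
    · exact sum_powerset_sdiff (M := ℝ) J (fun B B' =>
        shuffleSign A (I \ A) * shuffleSign A' ((I \ A) \ A') *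
          shuffleSign B (J \ B) * shuffleSign B' ((J \ B) \ B') * ω₁ A B * ω₂ A' B' *
          ω₃ ((I \ A) \ A') ((J \ B) \ B'))

lemma wedge_smul_right (c : ℝ) (ω₁ ω₂ : DForm n) : wedge ω₁ (c • ω₂) = c • wedge ω₁ ω₂ := by
  funext I J
  simp only [wedge, Pi.smul_apply, smul_eq_mul, Finset.mul_sum]
  exact Finset.sum_congr rfl fun A _ => Finset.sum_congr rfl fun B _ => by ring

lemma wedge_add_right (ω₁ ω₂ ω₃ : DForm n) :
    wedge ω₁ (ω₂ + ω₃) = wedge ω₁ ω₂ + wedge ω₁ ω₃ := by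
  funext I J
  simp only [wedge, Pi.add_apply]
  rw [← Finset.sum_add_distrib]
  refine Finset.sum_congr rfl fun A _ => ?_
  rw [← Finset.sum_add_distrib]
  exact Finset.sum_congr rfl fun B _ => by ring

lemma wedge_zero_right (ω : DForm n) : wedge ω 0 = 0 := by
  funext I J
  simp [wedge]

lemma contr_smul (c : ℝ) (ω : DForm n) : contr (c • ω) = c • contr ω := by
  funext I J
  simp only [contr, Pi.smul_apply, smul_eq_mul, Finset.mul_sum]
  refine Finset.sum_congr rfl fun j _ => ?_
  split_ifs with h
  · ring
  · ring

lemma contr_add (ω₁ ω₂ : DForm n) : contr (ω₁ + ω₂) = contr ω₁ + contr ω₂ := by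
  funext I J
  simp only [contr, Pi.add_apply]
  rw [← Finset.sum_add_distrib]
  refine Finset.sum_congr rfl fun j _ => ?_
  split_ifs with h
  · ring
  · ring

lemma contr_zero : contr (0 : DForm n) = 0 := by
  funext I J
  simp [contr]

lemma contr_sum {ι : Type*} (s : Finset ι) (f : ι → DForm n) :
    contr (∑ i ∈ s, f i) = ∑ i ∈ s, contr (f i) := by
  classical
  induction s using Finset.induction with
  | empty => simp [contr_zero]
  | @insert a s h ih => rw [Finset.sum_insert h, contr_add, ih, Finset.sum_insert h]

lemma isOfDeg_wedge {ω₁ ω₂ : DForm n} {p q r s : ℕ} (h₁ : IsOfDeg ω₁ p q)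
    (h₂ : IsOfDeg ω₂ r s) : IsOfDeg (wedge ω₁ ω₂) (p + r) (q + s) := by
  intro I J hne
  rw [wedge] at hne
  obtain ⟨A, hA, h1⟩ := Finset.exists_ne_zero_of_sum_ne_zero hne
  obtain ⟨B, hB, h2⟩ := Finset.exists_ne_zero_of_sum_ne_zero h1
  have hω₁ : ω₁ A B ≠ 0 := fun hz => h2 (by rw [hz]; ring)
  have hω₂ : ω₂ (I \ A) (J \ B) ≠ 0 := fun hz => h2 (by rw [hz]; ring)
  obtain ⟨e1, e2⟩ := h₁ _ _ hω₁
  obtain ⟨e3, e4⟩ := h₂ _ _ hω₂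
  have hAI : A ⊆ I := Finset.mem_powerset.1 hA
  have hBJ : B ⊆ J := Finset.mem_powerset.1 hB
  have c1 := Finset.card_sdiff_add_card_eq_card hAI
  have c2 := Finset.card_sdiff_add_card_eq_card hBJ
  omega

lemma isOfDeg_gMetric : IsOfDeg (gMetric n) 1 1 := by
  intro I J hne
  rw [gMetric] at hne
  split_ifs at hne with hc
  · exact ⟨hc.2, hc.1 ▸ hc.2⟩
  · exact absurd rfl hne

lemma isOfDeg_dpow {ω : DForm n} (h : IsOfDeg ω 1 1) (k : ℕ) : IsOfDeg (dpow ω k) k k := by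
  induction k with
  | zero =>
    intro I J hne
    rw [dpow] at hne
    dsimp only at hne
    split_ifs at hne with hc
    · simp [hc.1, hc.2]
    · exact absurd rfl hne
  | succ k ih =>
    have := isOfDeg_wedge h ih
    rwa [Nat.add_comm 1 k] at this

lemma isOfDeg_contr {ω : DForm n} {p q : ℕ} (h : IsOfDeg ω p q) :
    IsOfDeg (contr ω) (p - 1) (q - 1) := by
  intro I J hne
  rw [contr] at hne
  obtain ⟨j, _, h1⟩ := Finset.exists_ne_zero_of_sum_ne_zero hne
  split_ifs at h1 with hc
  · exact absurd rfl h1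
  · push_neg at hc
    have hω : ω (insert j I) (insert j J) ≠ 0 := fun hz => h1 (by rw [hz]; ring)
    obtain ⟨e1, e2⟩ := h _ _ hω
    rw [Finset.card_insert_of_notMem hc.1] at e1
    rw [Finset.card_insert_of_notMem hc.2] at e2
    omega

lemma isOfDeg_citer {ω : DForm n} {p : ℕ} (h : IsOfDeg ω p p) (k : ℕ) :
    IsOfDeg (citer ω k) (p - k) (p - k) := by
  induction k with
  | zero => simpa [citer]
  | succ k ih =>
    rw [citer, show p - (k + 1) = (p - k) - 1 from by omega]
    exact isOfDeg_contr ih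

lemma contr_eq_zero_of_deg_zero {ω : DForm n} {q : ℕ} (h : IsOfDeg ω 0 q) :
    contr ω = 0 := by
  funext I J
  rw [contr]
  refine Finset.sum_eq_zero fun j _ => ?_
  split_ifs with hc
  · rfl
  · by_cases hω : ω (insert j I) (insert j J) = 0
    · rw [hω]; simp
    · have := (h _ _ hω).1
      simp at this

lemma eq_zero_of_isOfDeg_gt {ω : DForm n} {p q : ℕ} (h : IsOfDeg ω p q) (hn : n < p) :
    ω = 0 := by
  funext I J
  by_contra hne
  have := (h I J hne).1
  have hle : I.card ≤ n := by
    have := Finset.card_le_card (Finset.subset_univ I)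
    simpa using this
  omega

lemma one_wedge (ω α : DForm n) : wedge (dpow ω 0) α = α := by
  funext I J
  rw [wedge]
  rw [Finset.sum_eq_single_of_mem ∅ (Finset.empty_mem_powerset I)]
  · rw [Finset.sum_eq_single_of_mem ∅ (Finset.empty_mem_powerset J)]
    · simp [dpow, shuffleSign_empty_left, shuffleSign]
    · intro B _ hBne
      simp [dpow, hBne]
  · intro A _ hAne
    refine Finset.sum_eq_zero fun B _ => ?_
    simp [dpow, hAne]

lemma wedge_g_apply (ω : DForm n) (I J : Finset (Fin n)) :
    wedge (gMetric n) ω I J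
      = ∑ a ∈ I ∩ J, shuffleSign {a} (I \ {a}) * shuffleSign {a} (J \ {a}) *
          ω (I \ {a}) (J \ {a}) := by
  rw [wedge]
  have step : ∀ A ∈ I.powerset,
      (∑ B ∈ J.powerset, shuffleSign A (I \ A) * shuffleSign B (J \ B) * gMetric n A B *
        ω (I \ A) (J \ B))
      = if A ⊆ J ∧ A.card = 1 then
          shuffleSign A (I \ A) * shuffleSign A (J \ A) * ω (I \ A) (J \ A) else 0 := by
    intro A hA
    by_cases hc : A ⊆ J ∧ A.card = 1
    · rw [if_pos hc]
      rw [Finset.sum_eq_single_of_mem A (Finset.mem_powerset.2 hc.1)]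
      · simp [gMetric, hc.2]
      · intro B _ hBne
        simp [gMetric, (hBne.symm : A ≠ B)]
    · rw [if_neg hc]
      refine Finset.sum_eq_zero fun B hB => ?_
      by_cases h' : A = B ∧ A.card = 1
      · exact absurd ⟨h'.1 ▸ Finset.mem_powerset.1 hB, h'.2⟩ hc
      · simp [gMetric, h']
  rw [Finset.sum_congr rfl step, ← Finset.sum_filter]
  have hset : I.powerset.filter (fun A => A ⊆ J ∧ A.card = 1)
      = (I ∩ J).image (fun a => {a}) := by
    ext A
    simp only [Finset.mem_filter, Finset.mem_powerset, Finset.mem_image, Finset.mem_inter,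
      Finset.card_eq_one]
    constructor
    · rintro ⟨hAI, hAJ, a, rfl⟩
      exact ⟨a, ⟨hAI (Finset.mem_singleton_self a), hAJ (Finset.mem_singleton_self a)⟩, rfl⟩
    · rintro ⟨a, ⟨haI, haJ⟩, rfl⟩
      exact ⟨Finset.singleton_subset_iff.2 haI, Finset.singleton_subset_iff.2 haJ, a, rfl⟩
  rw [hset, Finset.sum_image (fun a _ b _ h => by simpa using h)]


lemma sum_ite_not {P : Fin n → Prop} [DecidablePred P] (f : Fin n → ℝ) :
    (∑ j : Fin n, if P j then 0 else f j)
      = ∑ j ∈ Finset.univ.filter (fun j => ¬ P j), f j := by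
  rw [Finset.sum_filter]
  refine Finset.sum_congr rfl fun j _ => ?_
  by_cases h : P j <;> simp [h]

lemma contr_wedge_g (ω : DForm n) (I J : Finset (Fin n)) :
    contr (wedge (gMetric n) ω) I J
      = ((n : ℝ) - I.card - J.card) * ω I J + wedge (gMetric n) (contr ω) I J := by
  classical
  -- the sets of admissible contraction indices
  set S : Finset (Fin n) := Finset.univ.filter (fun j => ¬ (j ∈ I ∨ j ∈ J)) with hS
  have hmemS : ∀ j, j ∈ S ↔ j ∉ I ∧ j ∉ J := by
    intro j; simp [hS, not_or]
  -- Left hand side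
  have lhs_eq : contr (wedge (gMetric n) ω) I J
      = (S.card : ℝ) * ω I J +
        ∑ j ∈ S, ∑ a ∈ I ∩ J,
          shuffleSign {j} I * shuffleSign {j} J *
            (shuffleSign {a} (insert j I \ {a}) * shuffleSign {a} (insert j J \ {a}) *
              ω (insert j I \ {a}) (insert j J \ {a})) := by
    rw [contr, sum_ite_not]
    have hterm : ∀ j ∈ S,
        shuffleSign {j} I * shuffleSign {j} J *
          wedge (gMetric n) ω (insert j I) (insert j J)
        = ω I J + ∑ a ∈ I ∩ J,
            shuffleSign {j} I * shuffleSign {j} J *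
              (shuffleSign {a} (insert j I \ {a}) * shuffleSign {a} (insert j J \ {a}) *
                ω (insert j I \ {a}) (insert j J \ {a})) := by
      intro j hj
      obtain ⟨hjI, hjJ⟩ := (hmemS j).1 hj
      have hins : insert j I ∩ insert j J = insert j (I ∩ J) := by
        ext x
        simp only [Finset.mem_inter, Finset.mem_insert]
        tauto
      have hjIJ : j ∉ I ∩ J := by simp [hjI]
      rw [wedge_g_apply, hins, Finset.sum_insert hjIJ]
      have e1 : insert j I \ {j} = I := by
        rw [Finset.sdiff_singleton_eq_erase, Finset.erase_insert hjI]
      have e2 : insert j J \ {j} = J := by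
        rw [Finset.sdiff_singleton_eq_erase, Finset.erase_insert hjJ]
      rw [e1, e2, mul_add, Finset.mul_sum]
      congr 1
      · have h1 := shuffleSign_mul_self {j} I
        have h2 := shuffleSign_mul_self {j} J
        linear_combination (ω I J * shuffleSign {j} J * shuffleSign {j} J) * h1 + ω I J * h2
    rw [Finset.sum_congr rfl hterm, Finset.sum_add_distrib, Finset.sum_const, nsmul_eq_mul]
  rw [lhs_eq]
  -- Right hand side
  have rhs_eq : wedge (gMetric n) (contr ω) I J
      = ((I ∩ J).card : ℝ) * ω I J +
        ∑ a ∈ I ∩ J, ∑ j ∈ S,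
          shuffleSign {a} (I \ {a}) * shuffleSign {a} (J \ {a}) *
            (shuffleSign {j} (I \ {a}) * shuffleSign {j} (J \ {a}) *
              ω (insert j (I \ {a})) (insert j (J \ {a}))) := by
    rw [wedge_g_apply]
    have hterm : ∀ a ∈ I ∩ J,
        shuffleSign {a} (I \ {a}) * shuffleSign {a} (J \ {a}) *
          contr ω (I \ {a}) (J \ {a})
        = ω I J + ∑ j ∈ S,
            shuffleSign {a} (I \ {a}) * shuffleSign {a} (J \ {a}) *
              (shuffleSign {j} (I \ {a}) * shuffleSign {j} (J \ {a}) *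
                ω (insert j (I \ {a})) (insert j (J \ {a}))) := by
      intro a ha
      obtain ⟨haI, haJ⟩ := Finset.mem_inter.1 ha
      rw [contr, sum_ite_not]
      have hSa : Finset.univ.filter (fun j => ¬ (j ∈ I \ {a} ∨ j ∈ J \ {a}))
          = insert a S := by
        ext x
        simp only [Finset.mem_filter, Finset.mem_univ, true_and, Finset.mem_insert,
          Finset.mem_sdiff, Finset.mem_singleton, hmemS, not_or]
        by_cases hx : x = a
        · simp [hx]
        · simp [hx]
      have haS : a ∉ S := by
        rw [hmemS]
        tauto
      rw [hSa, Finset.sum_insert haS]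
      have e1 : insert a (I \ {a}) = I := by
        rw [Finset.sdiff_singleton_eq_erase, Finset.insert_erase haI]
      have e2 : insert a (J \ {a}) = J := by
        rw [Finset.sdiff_singleton_eq_erase, Finset.insert_erase haJ]
      rw [e1, e2, mul_add, Finset.mul_sum]
      congr 1
      · have h1 := shuffleSign_mul_self {a} (I \ {a})
        have h2 := shuffleSign_mul_self {a} (J \ {a})
        linear_combination (ω I J * shuffleSign {a} (J \ {a}) * shuffleSign {a} (J \ {a})) * h1
          + ω I J * h2
    rw [Finset.sum_congr rfl hterm, Finset.sum_add_distrib, Finset.sum_const, nsmul_eq_mul]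
  rw [rhs_eq]
  -- match the cross terms
  have cross : ∑ j ∈ S, ∑ a ∈ I ∩ J,
      shuffleSign {j} I * shuffleSign {j} J *
        (shuffleSign {a} (insert j I \ {a}) * shuffleSign {a} (insert j J \ {a}) *
          ω (insert j I \ {a}) (insert j J \ {a}))
      = ∑ a ∈ I ∩ J, ∑ j ∈ S,
        shuffleSign {a} (I \ {a}) * shuffleSign {a} (J \ {a}) *
          (shuffleSign {j} (I \ {a}) * shuffleSign {j} (J \ {a}) *
            ω (insert j (I \ {a})) (insert j (J \ {a}))) := by
    rw [Finset.sum_comm]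
    refine Finset.sum_congr rfl fun a ha => Finset.sum_congr rfl fun j hj => ?_
    obtain ⟨haI, haJ⟩ := Finset.mem_inter.1 ha
    obtain ⟨hjI, hjJ⟩ := (hmemS j).1 hj
    have hne : a ≠ j := fun h => hjI (h ▸ haI)
    have eI : insert j I \ {a} = insert j (I \ {a}) := by
      ext x
      simp only [Finset.mem_sdiff, Finset.mem_insert, Finset.mem_singleton]
      constructor
      · rintro ⟨h1 | h1, h2⟩
        · exact Or.inl h1
        · exact Or.inr ⟨h1, h2⟩
      · rintro (h1 | ⟨h1, h2⟩)
        · exact ⟨Or.inl h1, fun hx => hne (hx.symm.trans h1)⟩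
        · exact ⟨Or.inr h1, h2⟩
    have eJ : insert j J \ {a} = insert j (J \ {a}) := by
      ext x
      simp only [Finset.mem_sdiff, Finset.mem_insert, Finset.mem_singleton]
      constructor
      · rintro ⟨h1 | h1, h2⟩
        · exact Or.inl h1
        · exact Or.inr ⟨h1, h2⟩
      · rintro (h1 | ⟨h1, h2⟩)
        · exact ⟨Or.inl h1, fun hx => hne (hx.symm.trans h1)⟩
        · exact ⟨Or.inr h1, h2⟩
    rw [eI, eJ]
    -- sign identities
    have dI : Disjoint ({a} : Finset (Fin n)) (I \ {a}) := by
      simp [Finset.disjoint_left]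
    have dJ : Disjoint ({a} : Finset (Fin n)) (J \ {a}) := by
      simp [Finset.disjoint_left]
    have djI : Disjoint ({j} : Finset (Fin n)) (I \ {a}) := by
      simp [Finset.disjoint_left]
      intro h; exact absurd h hjI
    have djJ : Disjoint ({j} : Finset (Fin n)) (J \ {a}) := by
      simp [Finset.disjoint_left]
      intro h; exact absurd h hjJ
    have uI : ({a} : Finset (Fin n)) ∪ (I \ {a}) = I :=
      Finset.union_sdiff_of_subset (Finset.singleton_subset_iff.2 haI)
    have uJ : ({a} : Finset (Fin n)) ∪ (J \ {a}) = J :=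
      Finset.union_sdiff_of_subset (Finset.singleton_subset_iff.2 haJ)
    have sI : shuffleSign {j} I = shuffleSign {j} {a} * shuffleSign {j} (I \ {a}) := by
      conv_lhs => rw [← uI]
      rw [shuffleSign_union_right _ dI]
    have sJ : shuffleSign {j} J = shuffleSign {j} {a} * shuffleSign {j} (J \ {a}) := by
      conv_lhs => rw [← uJ]
      rw [shuffleSign_union_right _ dJ]
    have sI' : shuffleSign {a} (insert j (I \ {a}))
        = shuffleSign {a} {j} * shuffleSign {a} (I \ {a}) := by
      rw [Finset.insert_eq, shuffleSign_union_right _ djI]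
    have sJ' : shuffleSign {a} (insert j (J \ {a}))
        = shuffleSign {a} {j} * shuffleSign {a} (J \ {a}) := by
      rw [Finset.insert_eq, shuffleSign_union_right _ djJ]
    rw [sI, sJ, sI', sJ']
    have key := shuffleSign_singleton_mul hne
    linear_combination (ω (insert j (I \ {a})) (insert j (J \ {a})) * shuffleSign {j} (I \ {a}) *
      shuffleSign {j} (J \ {a}) * shuffleSign {a} (I \ {a}) * shuffleSign {a} (J \ {a}) *
      (shuffleSign {j} {a} * shuffleSign {a} {j} - 1)) * key
  rw [cross]
  -- cardinality bookkeeping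
  have hScard : S.card = n - (I ∪ J).card := by
    have : S = (I ∪ J)ᶜ := by
      ext x
      simp [hS, Finset.mem_compl, not_or]
    rw [this, Finset.card_compl]
    simp
  have hUn : (I ∪ J).card ≤ n := by
    have := Finset.card_le_card (Finset.subset_univ (I ∪ J))
    simpa using this
  have hcards := Finset.card_union_add_card_inter I J
  have : (S.card : ℝ) = (n : ℝ) - I.card - J.card + ((I ∩ J).card : ℝ) := by
    rw [hScard]
    have h1 : ((n - (I ∪ J).card : ℕ) : ℝ) = (n : ℝ) - ((I ∪ J).card : ℝ) := by
      rw [Nat.cast_sub hUn]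
    rw [h1]
    have h2 : ((I ∪ J).card : ℝ) + ((I ∩ J).card : ℝ) = (I.card : ℝ) + (J.card : ℝ) := by
      exact_mod_cast congrArg (Nat.cast : ℕ → ℝ) hcards
    linarith
  rw [this]
  ring

lemma isOfDeg_ofMatrix (h : Matrix (Fin n) (Fin n) ℝ) : IsOfDeg (ofMatrix h) 1 1 := by
  intro I J hne
  rw [ofMatrix] at hne
  obtain ⟨i, _, h1⟩ := Finset.exists_ne_zero_of_sum_ne_zero hne
  obtain ⟨j, _, h2⟩ := Finset.exists_ne_zero_of_sum_ne_zero h1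
  split_ifs at h2 with hc
  · rw [hc.1, hc.2]; simp
  · exact absurd rfl h2

lemma wedge_g_dpow (m : ℕ) (α : DForm n) :
    wedge (gMetric n) (wedge (dpow (gMetric n) m) α)
      = wedge (dpow (gMetric n) (m + 1)) α := by
  rw [show dpow (gMetric n) (m + 1) = wedge (gMetric n) (dpow (gMetric n) m) from rfl,
    wedge_assoc]

lemma contr_wedge_gpow {α : DForm n} {p : ℕ} (hα : IsOfDeg α p p) (m : ℕ) :
    contr (wedge (dpow (gMetric n) m) α)
      = ((m : ℝ) * ((n : ℝ) - 2 * p - m + 1)) • wedge (dpow (gMetric n) (m - 1)) α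
        + wedge (dpow (gMetric n) m) (contr α) := by
  induction m with
  | zero => simp [one_wedge]
  | succ m ih =>
    rw [← wedge_g_dpow m α]
    have hβ : IsOfDeg (wedge (dpow (gMetric n) m) α) (m + p) (m + p) :=
      isOfDeg_wedge (isOfDeg_dpow isOfDeg_gMetric m) hα
    have hfun : contr (wedge (gMetric n) (wedge (dpow (gMetric n) m) α))
        = ((n : ℝ) - 2 * (m + p)) • wedge (dpow (gMetric n) m) α
          + wedge (gMetric n) (contr (wedge (dpow (gMetric n) m) α)) := by
      funext I J
      rw [contr_wedge_g]
      simp only [Pi.add_apply, Pi.smul_apply, smul_eq_mul]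
      congr 1
      by_cases hz : wedge (dpow (gMetric n) m) α I J = 0
      · rw [hz]; ring
      · obtain ⟨e1, e2⟩ := hβ I J hz
        rw [e1, e2]; push_cast; ring
    rw [hfun, ih, wedge_add_right, wedge_smul_right, wedge_g_dpow m (contr α)]
    rw [Nat.add_sub_cancel]
    rcases Nat.eq_zero_or_pos m with hm | hm
    · subst hm
      simp only [Nat.cast_zero, zero_mul, zero_smul, smul_zero, zero_add]
      congr 1
      push_cast
      ring
    · obtain ⟨k, rfl⟩ : ∃ k, m = k + 1 := ⟨m - 1, by omega⟩
      rw [show k + 1 - 1 = k from rfl, wedge_g_dpow k α, ← add_assoc, ← add_smul]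
      congr 1
      push_cast
      ring

lemma scalar_key {q r i : ℕ} (h1 : 1 ≤ i) (h2 : q ≤ i + r) (h3 : i ≤ q) :
    ((-1:ℝ)^(i+q) / ((i.factorial : ℝ) * (q.factorial : ℝ) * (((i + (r+1) - q).factorial : ℝ)))) *
        (((i + (r+1) - q : ℕ) : ℝ) *
          ((n:ℝ) - 2*((q - i : ℕ) : ℝ) - ((i + (r+1) - q : ℕ) : ℝ) + 1))
      + ((-1:ℝ)^((i-1)+q) /
          (((i-1).factorial : ℝ) * (q.factorial : ℝ) * (((i + r - q).factorial : ℝ)))) 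
      = ((n:ℝ) - q - r) *
        ((-1:ℝ)^(i+q) / ((i.factorial : ℝ) * (q.factorial : ℝ) * (((i + r - q).factorial : ℝ)))) := by
  obtain ⟨k, rfl⟩ : ∃ k, i = k + 1 := ⟨i - 1, by omega⟩
  have hq1 : q ≤ k + 1 + r := h2
  have hq2 : k + 1 ≤ q := h3
  rw [show k + 1 + (r+1) - q = (k + 1 + r - q) + 1 from by omega,
    show k + 1 - 1 = k from rfl,
    show k + 1 + q = (k + q) + 1 from by omega,
    pow_succ, Nat.factorial_succ (k + 1 + r - q), Nat.factorial_succ k]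
  have f1 : ((k.factorial : ℕ) : ℝ) ≠ 0 := Nat.cast_ne_zero.mpr (Nat.factorial_ne_zero k)
  have f2 : ((q.factorial : ℕ) : ℝ) ≠ 0 := Nat.cast_ne_zero.mpr (Nat.factorial_ne_zero q)
  have f3 : (((k + 1 + r - q).factorial : ℕ) : ℝ) ≠ 0 :=
    Nat.cast_ne_zero.mpr (Nat.factorial_ne_zero _)
  have c1 : ((k + 1 + r - q : ℕ) : ℝ) = (k : ℝ) + 1 + r - q := by
    rw [Nat.cast_sub hq1]; push_cast; ring
  have c2 : ((q - (k + 1) : ℕ) : ℝ) = (q : ℝ) - ((k : ℝ) + 1) := by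
    rw [Nat.cast_sub hq2]; push_cast; ring
  push_cast [c1, c2]
  have g1 : (k : ℝ) + 1 ≠ 0 := by positivity
  have g2 : (k : ℝ) + 1 + r - q + 1 ≠ 0 := by
    have : (0:ℝ) < (k : ℝ) + 1 + r - q + 1 := by
      have := (Nat.cast_le (α := ℝ)).2 hq1
      push_cast at this
      linarith
    linarith
  field_simp
  ring

lemma contr_sCofExt (h : Matrix (Fin n) (Fin n) ℝ) (q r : ℕ) :
    contr (sCofExt h (r + 1) q) = ((n : ℝ) - q - r) • sCofExt h r q := by
  classical
  set ω := dpow (ofMatrix h) q with hωdef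
  have hω : IsOfDeg ω q q := isOfDeg_dpow (isOfDeg_ofMatrix h) q
  have hciter : ∀ i, IsOfDeg (citer ω i) (q - i) (q - i) := fun i => isOfDeg_citer hω i
  rw [sCofExt, sCofExt, contr_sum, Finset.smul_sum]
  have expand : ∀ i ∈ Finset.Icc (q - (r+1)) q,
      contr (((-1:ℝ)^(i+q) /
          ((i.factorial : ℝ) * (q.factorial : ℝ) * (((i + (r+1) - q).factorial : ℝ)))) •
        wedge (dpow (gMetric n) (i + (r+1) - q)) (citer ω i))
      = (((-1:ℝ)^(i+q) /
            ((i.factorial : ℝ) * (q.factorial : ℝ) * (((i + (r+1) - q).factorial : ℝ)))) *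
          (((i + (r+1) - q : ℕ) : ℝ) *
            ((n:ℝ) - 2*((q - i : ℕ) : ℝ) - ((i + (r+1) - q : ℕ) : ℝ) + 1))) •
          wedge (dpow (gMetric n) ((i + (r+1) - q) - 1)) (citer ω i)
        + ((-1:ℝ)^(i+q) /
            ((i.factorial : ℝ) * (q.factorial : ℝ) * (((i + (r+1) - q).factorial : ℝ)))) •
          wedge (dpow (gMetric n) (i + (r+1) - q)) (citer ω (i+1)) := by
    intro i hi
    rw [contr_smul, contr_wedge_gpow (hciter i), smul_add, smul_smul]
    rfl
  rw [Finset.sum_congr rfl expand, Finset.sum_add_distrib]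
  have reidx : ∑ i ∈ Finset.Icc (q - (r+1)) q,
      ((-1:ℝ)^(i+q) /
          ((i.factorial : ℝ) * (q.factorial : ℝ) * (((i + (r+1) - q).factorial : ℝ)))) •
        wedge (dpow (gMetric n) (i + (r+1) - q)) (citer ω (i+1))
      = ∑ j ∈ Finset.Icc (q - (r+1) + 1) (q + 1),
        ((-1:ℝ)^((j-1)+q) /
            (((j-1).factorial : ℝ) * (q.factorial : ℝ) * ((((j-1) + (r+1) - q).factorial : ℝ)))) •
          wedge (dpow (gMetric n) ((j-1) + (r+1) - q)) (citer ω j) := by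
    rw [← Finset.map_add_right_Icc _ _ 1, Finset.sum_map]
    refine Finset.sum_congr rfl fun i hi => ?_
    simp [addRightEmbedding_apply]
  rw [reidx]
  have hsplit : Finset.Icc (q - (r+1) + 1) (q + 1)
      = insert (q + 1) (Finset.Icc (q - (r+1) + 1) q) := by
    ext x
    simp only [Finset.mem_Icc, Finset.mem_insert]
    omega
  rw [hsplit, Finset.sum_insert (by simp)]
  have hzero : citer ω (q + 1) = 0 := by
    rw [show citer ω (q + 1) = contr (citer ω q) from rfl]
    exact contr_eq_zero_of_deg_zero (by simpa using hciter q)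
  rw [hzero, wedge_zero_right, smul_zero, zero_add]
  rcases le_or_gt q r with hqr | hqr
  · -- q ≤ r
    have e1 : q - (r+1) = 0 := by omega
    have e2 : q - r = 0 := by omega
    rw [e1, e2]
    have hins : Finset.Icc 0 q = insert 0 (Finset.Icc (0 + 1) q) := by
      ext x
      simp only [Finset.mem_Icc, Finset.mem_insert]
      omega
    rw [hins, Finset.sum_insert (by simp), Finset.sum_insert (by simp),
      add_assoc, ← Finset.sum_add_distrib]
    congr 1
    · -- the i = 0 term
      rw [show 0 + (r + 1) - q - 1 = 0 + r - q from by omega, smul_smul]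
      congr 1
      rw [show (0:ℕ) + (r+1) - q = (0 + r - q) + 1 from by omega]
      rw [show (0:ℕ) + r - q = r - q from by omega, show q - 0 = q from rfl,
        Nat.factorial_succ (r - q)]
      have f2 : ((q.factorial : ℕ) : ℝ) ≠ 0 := Nat.cast_ne_zero.mpr (Nat.factorial_ne_zero q)
      have f3 : (((r - q).factorial : ℕ) : ℝ) ≠ 0 :=
        Nat.cast_ne_zero.mpr (Nat.factorial_ne_zero _)
      have c1 : ((r - q : ℕ) : ℝ) = (r : ℝ) - q := Nat.cast_sub hqr
      push_cast [c1]
      have g1 : (r : ℝ) - q + 1 ≠ 0 := by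
        have := (Nat.cast_le (α := ℝ)).2 hqr
        linarith
      field_simp
      ring
    · refine Finset.sum_congr rfl fun i hi => ?_
      obtain ⟨hi1, hi2⟩ := Finset.mem_Icc.1 hi
      rw [show i + (r + 1) - q - 1 = i + r - q from by omega,
        show (i - 1) + (r + 1) - q = i + r - q from by omega,
        ← add_smul, smul_smul]
      congr 1
      exact scalar_key (n := n) (q := q) (r := r) (i := i) (by omega) (by omega) hi2
  · -- r < q
    have e1 : q - (r+1) + 1 = q - r := by omega
    rw [e1]
    have hins : Finset.Icc (q - (r+1)) q = insert (q - (r+1)) (Finset.Icc (q - r) q) := by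
      ext x
      simp only [Finset.mem_Icc, Finset.mem_insert]
      omega
    rw [hins, Finset.sum_insert (by simp only [Finset.mem_Icc]; omega)]
    rw [show (q - (r+1)) + (r+1) - q = 0 from by omega, Nat.cast_zero, zero_mul, mul_zero,
      zero_smul, zero_add, ← Finset.sum_add_distrib]
    refine Finset.sum_congr rfl fun i hi => ?_
    obtain ⟨hi1, hi2⟩ := Finset.mem_Icc.1 hi
    rw [show i + (r + 1) - q - 1 = i + r - q from by omega,
      show (i - 1) + (r + 1) - q = i + r - q from by omega,
      ← add_smul, smul_smul]
    congr 1
    exact scalar_key (n := n) (q := q) (r := r) (i := i) (by omega) (by omega) hi2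


end DForm

open DForm in
/-- General Cayley–Hamilton theorem: `s_{(r,n-i)}(h) = 0` for `i+1 ≤ r ≤ n-i`. -/
theorem statement11 (n : ℕ) (h : Matrix (Fin n) (Fin n) ℝ)
    (hsym : ∀ i j, h i j = h j i)
    (i r : ℕ) (hr1 : i + 1 ≤ r) (hr2 : r + i ≤ n) :
    sCofExt h r (n - i) = 0 := by
  set q := n - i with hq
  have hqn : q ≤ n := Nat.sub_le n i
  have base : sCofExt h (n + 1) q = 0 := by
    rw [sCofExt]
    refine Finset.sum_eq_zero fun k hk => ?_
    have hk2 : k ≤ q := (Finset.mem_Icc.1 hk).2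
    have hdeg := isOfDeg_wedge (isOfDeg_dpow isOfDeg_gMetric (k + (n+1) - q))
      (isOfDeg_citer (isOfDeg_dpow (isOfDeg_ofMatrix h) q) k)
    rw [eq_zero_of_isOfDeg_gt hdeg (by omega), smul_zero]
  have main : ∀ j, j ≤ q → sCofExt h (n + 1 - j) q = 0 := by
    intro j
    induction j with
    | zero => intro _; simpa using base
    | succ j ih =>
      intro hj
      have hj' : j ≤ q := by omega
      have key := contr_sCofExt h q (n - j)
      have e : (n - j) + 1 = n + 1 - j := by omega
      rw [e, ih hj', contr_zero] at key
      have hcoef : ((n:ℝ) - q - ((n - j : ℕ) : ℝ)) ≠ 0 := by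
        have c1 : ((n - j : ℕ):ℝ) = (n:ℝ) - j := Nat.cast_sub (by omega)
        rw [c1]
        have hlt : (j:ℝ) < q := by exact_mod_cast (by omega : j < q)
        intro hz
        linarith
      have h2 : ((n:ℝ) - q - ((n - j : ℕ) : ℝ))⁻¹ •
          (((n:ℝ) - q - ((n - j : ℕ) : ℝ)) • sCofExt h (n - j) q) = 0 := by
        rw [← key, smul_zero]
      rw [inv_smul_smul₀ hcoef] at h2
      rw [show n + 1 - (j + 1) = n - j from by omega]
      exact h2
  rw [show r = n + 1 - (n + 1 - r) from by omega]
  exact main (n + 1 - r) (by omega)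
end
end

section
/- Let n = 2k be even and let R be a symmetric (2,2)-double form satisfying the first Bianchi identity on an n-dimensional real inner product space (V,g). Then the top cofactor transformation vanishes: T_n(R) := (c^n(R^k)/n!)·g − c^{n−1}(R^k)/(n−1)! = 0 as a bilinear form on V. -/
noncomputable section

open Finset

open DForm

variable {n : ℕ}

lemma shuffleSign_sq (A B : Finset (Fin n)) : shuffleSign A B * shuffleSign A B = 1 := by
  unfold shuffleSign
  rw [← pow_add]
  exact Even.neg_one_pow ⟨_, rfl⟩

lemma wedge_deg {ω₁ ω₂ : DForm n} {p q r s : ℕ} (h₁ : IsOfDeg ω₁ p q)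
    (h₂ : IsOfDeg ω₂ r s) : IsOfDeg (wedge ω₁ ω₂) (p + r) (q + s) := by
  intro I J hIJ
  unfold wedge at hIJ
  obtain ⟨A, hA, hA2⟩ := Finset.exists_ne_zero_of_sum_ne_zero hIJ
  obtain ⟨B, hB, hB2⟩ := Finset.exists_ne_zero_of_sum_ne_zero hA2
  have h1 : ω₁ A B ≠ 0 := fun h => hB2 (by simp [h])
  have h2 : ω₂ (I \ A) (J \ B) ≠ 0 := fun h => hB2 (by simp [h])
  obtain ⟨hAp, hBq⟩ := h₁ A B h1
  obtain ⟨hIr, hJs⟩ := h₂ _ _ h2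
  rw [Finset.mem_powerset] at hA hB
  constructor
  · rw [← Finset.card_sdiff_add_card_eq_card hA, hAp, hIr, add_comm]
  · rw [← Finset.card_sdiff_add_card_eq_card hB, hBq, hJs, add_comm]

lemma dpow_deg {ω : DForm n} {p q : ℕ} (h : IsOfDeg ω p q) (m : ℕ) :
    IsOfDeg (dpow ω m) (m * p) (m * q) := by
  induction m with
  | zero =>
    intro I J hIJ
    simp only [dpow] at hIJ
    by_cases hc : I = ∅ ∧ J = ∅
    · simp [hc.1, hc.2]
    · simp [hc] at hIJ
  | succ m ih =>
    have := wedge_deg h ih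
    intro I J hIJ
    obtain ⟨h1, h2⟩ := this I J hIJ
    constructor <;> [rw [h1]; rw [h2]] <;> ring

lemma top_form {ω : DForm n} (h : IsOfDeg ω n n) (I J : Finset (Fin n)) :
    ω I J = if I = J ∧ I.card = n then ω Finset.univ Finset.univ else 0 := by
  by_cases hc : I = Finset.univ ∧ J = Finset.univ
  · rw [hc.1, hc.2]
    simp [Finset.card_univ]
  · have h0 : ω I J = 0 := by
      by_contra h0
      obtain ⟨h1, h2⟩ := h I J h0
      exact hc ⟨Finset.card_eq_iff_eq_univ I |>.mp (by simpa using h1),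
        Finset.card_eq_iff_eq_univ J |>.mp (by simpa using h2)⟩
    rw [h0]
    by_cases hd : I = J ∧ I.card = n
    · exfalso
      have hI : I = Finset.univ := Finset.card_eq_iff_eq_univ I |>.mp (by simpa using hd.2)
      exact hc ⟨hI, hd.1 ▸ hI⟩
    · simp [hd]

lemma citer_top {ω : DForm n} (h : IsOfDeg ω n n) (r : ℕ) (hr : r ≤ n) :
    ∀ I J : Finset (Fin n), citer ω r I J =
      if I = J ∧ I.card = n - r then (r.factorial : ℝ) * ω Finset.univ Finset.univ else 0 := by
  induction r with
  | zero => intro I J; simpa [citer] using top_form h I J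
  | succ r ih =>
    have hr' : r ≤ n := Nat.le_of_succ_le hr
    have ih := ih hr'
    intro I J
    show contr (citer ω r) I J = _
    unfold contr
    by_cases hc : I = J ∧ I.card = n - (r + 1)
    · obtain ⟨rfl, hcard⟩ := hc
      have hterm : ∀ m : Fin n,
          (if m ∈ I ∨ m ∈ I then 0
            else shuffleSign {m} I * shuffleSign {m} I * citer ω r (insert m I) (insert m I))
          = if m ∈ I then 0 else ((r.factorial : ℝ) * ω Finset.univ Finset.univ) := by
        intro m
        by_cases hm : m ∈ I
        · simp [hm]
        · simp only [hm, or_self, if_false]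
          rw [ih (insert m I) (insert m I), Finset.card_insert_of_notMem hm, hcard]
          have h2 : n - (r + 1) + 1 = n - r := by omega
          rw [h2]
          simp [shuffleSign_sq]
      rw [Finset.sum_congr rfl (fun m _ => hterm m)]
      rw [Finset.sum_ite, Finset.sum_const, Finset.sum_const]
      simp only [smul_zero, zero_add, nsmul_eq_mul]
      have hcardf : (Finset.univ.filter fun m => ¬ m ∈ I).card = n - I.card := by
        rw [Finset.filter_not, Finset.filter_mem_eq_inter, Finset.univ_inter,
          Finset.card_sdiff_of_subset (Finset.subset_univ I), Finset.card_univ, Fintype.card_fin]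
      rw [hcardf, hcard]
      simp only [and_self, if_true]
      have h3 : n - (n - (r + 1)) = r + 1 := by omega
      rw [h3, Nat.factorial_succ]
      push_cast
      ring
    · rw [if_neg hc]
      apply Finset.sum_eq_zero
      intro m _
      by_cases hm : m ∈ I ∨ m ∈ J
      · simp [hm]
      · push_neg at hm
        simp only [hm.1, hm.2, or_self, if_false]
        rw [ih (insert m I) (insert m J)]
        have hne : ¬ (insert m I = insert m J ∧ (insert m I).card = n - r) := by
          rintro ⟨he, hcard⟩
          apply hc
          have hIJ : I = J := by
            have h4 := congrArg (Finset.erase · m) he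
            simpa [Finset.erase_insert hm.1, Finset.erase_insert hm.2] using h4
          refine ⟨hIJ, ?_⟩
          rw [Finset.card_insert_of_notMem hm.1] at hcard
          omega
        simp [hne]


open DForm in
/-- For `n = 2k` even, the top cofactor transformation vanishes:
`T_n(R) = (c^n(R^k)/n!) g - c^{n-1}(R^k)/(n-1)! = 0`. -/
theorem statement15 (n k : ℕ) (hn : n = 2 * k) (hk : 1 ≤ k) (R : DForm n)
    (hsym : IsSym R) (hb : Bianchi2 R) (hgr : IsOfDeg R 2 2) :
    (toScalar (citer (dpow R k) n) / (n.factorial : ℝ)) • gMetric n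
      - (((n - 1).factorial : ℕ) : ℝ)⁻¹ • citer (dpow R k) (n - 1) = 0 := by
  have hdeg : IsOfDeg (dpow R k) n n := by
    have := dpow_deg hgr k
    rwa [show k * 2 = n by omega] at this
  set lam := dpow R k Finset.univ Finset.univ with hlam
  have hn1 : 1 ≤ n := by omega
  have hscal : toScalar (citer (dpow R k) n) = (n.factorial : ℝ) * lam := by
    unfold toScalar
    rw [citer_top hdeg n le_rfl]
    simp [hlam]
  funext I J
  simp only [Pi.sub_apply, Pi.smul_apply, smul_eq_mul, Pi.zero_apply]
  rw [hscal, citer_top hdeg (n - 1) (by omega)]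
  have hfac : (n.factorial : ℝ) ≠ 0 := Nat.cast_ne_zero.mpr n.factorial_ne_zero
  have hfac1 : (((n - 1).factorial : ℕ) : ℝ) ≠ 0 := Nat.cast_ne_zero.mpr (n-1).factorial_ne_zero
  have hsub : n - (n - 1) = 1 := by omega
  rw [hsub]
  unfold gMetric
  by_cases hc : I = J ∧ I.card = 1
  · rw [if_pos hc, if_pos hc]
    field_simp
    simp [hlam]
  · rw [if_neg hc, if_neg hc]
    ring
end
end
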